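/- arXiv:1302.2235 — 3 statements merged into one kernel-verified Lean document; each statement's English description precedes it below -/
import Mathlib

section
/- The set 𝔰₀ = {x ∈ ℓ∞ : for every ε > 0, the series ∑_{n : |x(n)| ≥ ε} 1/n converges} is a closed (two-sided) ideal in the Banach algebra ℓ∞ of bounded real sequences with the supremum norm. -/
/-- `𝔰₀`: the set of bounded real sequences `x` such that for every `ε > 0` the series
`∑_{n : |x n| ≥ ε} 1/n` converges. -/
def s0 : Set (lp (fun _ : ℕ => ℝ) ⊤) :=
  {x | ∀ ε : ℝ, 0 < ε → Summable (Set.indicator {n : ℕ | ε ≤ |x n|} fun n => 1 / (n : ℝ))}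

lemma s0_f_nonneg : ∀ n : ℕ, 0 ≤ (fun n => 1 / (n : ℝ)) n := fun n => by positivity

lemma s0_mono {S T : Set ℕ} (h : S ⊆ T)
    (hT : Summable (Set.indicator T fun n => 1 / (n : ℝ))) :
    Summable (Set.indicator S fun n => 1 / (n : ℝ)) := by
  refine hT.of_nonneg_of_le (fun n => Set.indicator_nonneg (fun n _ => s0_f_nonneg n) n)
    (fun n => ?_)
  by_cases hn : n ∈ S
  · rw [Set.indicator_of_mem hn, Set.indicator_of_mem (h hn)]
  · rw [Set.indicator_of_notMem hn]
    exact Set.indicator_nonneg (fun n _ => s0_f_nonneg n) n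

lemma s0_union {S T : Set ℕ}
    (hS : Summable (Set.indicator S fun n => 1 / (n : ℝ)))
    (hT : Summable (Set.indicator T fun n => 1 / (n : ℝ))) :
    Summable (Set.indicator (S ∪ T) fun n => 1 / (n : ℝ)) := by
  refine (hS.add hT).of_nonneg_of_le
    (fun n => Set.indicator_nonneg (fun n _ => s0_f_nonneg n) n) (fun n => ?_)
  by_cases hn : n ∈ S ∪ T
  · rw [Set.indicator_of_mem hn]
    rcases hn with hn | hn
    · rw [Set.indicator_of_mem hn]
      exact le_add_of_nonneg_right (Set.indicator_nonneg (fun n _ => s0_f_nonneg n) n)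
    · rw [Set.indicator_of_mem hn]
      exact le_add_of_nonneg_left (Set.indicator_nonneg (fun n _ => s0_f_nonneg n) n)
  · rw [Set.indicator_of_notMem hn]
    exact add_nonneg (Set.indicator_nonneg (fun n _ => s0_f_nonneg n) n)
      (Set.indicator_nonneg (fun n _ => s0_f_nonneg n) n)

lemma s0_zero : (0 : lp (fun _ : ℕ => ℝ) ⊤) ∈ s0 := by
  intro ε hε
  have : {n : ℕ | ε ≤ |(0 : lp (fun _ : ℕ => ℝ) ⊤) n|} = ∅ := by
    ext n
    simp [lp.coeFn_zero, hε.not_ge]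
  rw [this, Set.indicator_empty]
  exact summable_zero

lemma s0_mul_aux (x y : lp (fun _ : ℕ => ℝ) ⊤) (hx : x ∈ s0) : x * y ∈ s0 := by
  intro ε hε
  set C := ‖y‖ + 1 with hC
  have hC0 : 0 < C := lt_of_le_of_lt (norm_nonneg y) (lt_add_one _)
  refine s0_mono (T := {n : ℕ | ε / C ≤ |x n|}) ?_ (hx (ε / C) (div_pos hε hC0))
  intro n hn
  simp only [Set.mem_setOf_eq] at hn ⊢
  have hy : |y n| ≤ C := le_trans (lp.norm_apply_le_norm ENNReal.top_ne_zero y n)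
    (le_add_of_nonneg_right zero_le_one)
  have hmul : |(x * y) n| = |x n| * |y n| := by
    rw [lp.infty_coeFn_mul]; exact abs_mul _ _
  rw [div_le_iff₀ hC0]
  calc ε ≤ |(x * y) n| := hn
    _ = |x n| * |y n| := hmul
    _ ≤ |x n| * C := by
        exact mul_le_mul_of_nonneg_left hy (abs_nonneg _)

/-- `𝔰₀` is a closed (two-sided) ideal in the Banach algebra `ℓ∞` of bounded real
sequences with the supremum norm. -/
theorem s0_closed_ideal :
    IsClosed s0 ∧
    (0 : lp (fun _ : ℕ => ℝ) ⊤) ∈ s0 ∧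
    (∀ x y, x ∈ s0 → y ∈ s0 → x + y ∈ s0) ∧
    (∀ (c : ℝ) x, x ∈ s0 → c • x ∈ s0) ∧
    (∀ x y : lp (fun _ : ℕ => ℝ) ⊤, x ∈ s0 → x * y ∈ s0 ∧ y * x ∈ s0) := by
  refine ⟨?_, s0_zero, ?_, ?_, ?_⟩
  · -- closed
    refine isClosed_of_closure_subset (fun x hx => ?_)
    intro ε hε
    obtain ⟨y, hy, hxy⟩ := Metric.mem_closure_iff.mp hx (ε / 2) (by linarith)
    refine s0_mono (T := {n : ℕ | ε / 2 ≤ |y n|}) ?_ (hy (ε / 2) (by linarith))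
    intro n hn
    simp only [Set.mem_setOf_eq] at hn ⊢
    have hsub : |x n - y n| ≤ dist x y := by
      have := lp.norm_apply_le_norm ENNReal.top_ne_zero (x - y) n
      rwa [lp.coeFn_sub, Pi.sub_apply, Real.norm_eq_abs, ← dist_eq_norm] at this
    have : |x n| ≤ |y n| + ε / 2 := by
      have h1 : |x n| - |y n| ≤ |x n - y n| := abs_sub_abs_le_abs_sub _ _
      linarith [hsub.trans hxy.le]
    linarith
  · -- add
    intro x y hx hy ε hε
    have h : {n : ℕ | ε ≤ |(x + y) n|} ⊆
        {n : ℕ | ε / 2 ≤ |x n|} ∪ {n : ℕ | ε / 2 ≤ |y n|} := by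
      intro n hn
      simp only [Set.mem_setOf_eq, Set.mem_union, lp.coeFn_add, Pi.add_apply] at hn ⊢
      by_contra hc
      push_neg at hc
      have := abs_add_le (x n) (y n)
      linarith [(abs_add_le (x n) (y n)).trans (by linarith [hc.1, hc.2] :
        |x n| + |y n| ≤ ε / 2 + ε / 2)]
    exact s0_mono h (s0_union (hx (ε / 2) (by linarith)) (hy (ε / 2) (by linarith)))
  · -- smul
    intro c x hx ε hε
    by_cases hc : c = 0
    · subst hc
      simpa using s0_zero ε hε
    have hc0 : 0 < |c| := abs_pos.mpr hc
    refine s0_mono (T := {n : ℕ | ε / |c| ≤ |x n|}) ?_ (hx (ε / |c|) (div_pos hε hc0))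
    intro n hn
    simp only [Set.mem_setOf_eq, lp.coeFn_smul, Pi.smul_apply, smul_eq_mul, abs_mul] at hn ⊢
    rw [div_le_iff₀ hc0]
    linarith [hn]
  · -- mul
    intro x y hx
    refine ⟨s0_mul_aux x y hx, ?_⟩
    have : y * x = x * y := mul_comm y x
    rw [this]
    exact s0_mul_aux x y hx
end

section
/- 𝔰₀₀ is dense in 𝔰₀ in the supremum norm: every bounded real sequence x such that ∑_{|x(n)| ≥ ε} 1/n converges for all ε > 0 is a uniform limit of bounded sequences whose support is a small set. -/
/-- `𝔰₀₀`: bounded real sequences whose support is a small set. -/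
def s00 : Set (lp (fun _ : ℕ => ℝ) ⊤) :=
  {x | Summable (Set.indicator {n : ℕ | x n ≠ 0} fun n => 1 / (n : ℝ))}

/-- `𝔰₀₀` is dense in `𝔰₀` in the supremum norm: every element of `𝔰₀` is a uniform
limit of bounded sequences whose support is a small set. -/
theorem s00_dense_in_s0 :
    ∀ x ∈ s0, ∀ ε : ℝ, 0 < ε → ∃ y ∈ s00, ‖x - y‖ < ε := by
  intro x hx ε hε
  set f : ℕ → ℝ := fun n => if ε / 2 ≤ |x n| then x n else 0 with hf
  have hmem : Memℓp f ⊤ := by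
    apply memℓp_infty
    refine ⟨‖x‖, ?_⟩
    rintro r ⟨n, rfl⟩
    simp only [hf]
    split
    · exact lp.norm_apply_le_norm (by norm_num) x n
    · rw [norm_zero]; exact norm_nonneg x
  refine ⟨⟨f, hmem⟩, ?_, ?_⟩
  · -- membership in s00
    have hsub : {n : ℕ | (⟨f, hmem⟩ : lp (fun _ : ℕ => ℝ) ⊤) n ≠ 0} ⊆
        {n : ℕ | ε / 2 ≤ |x n|} := by
      intro n hn
      simp only [Set.mem_setOf_eq] at hn ⊢
      by_contra h
      exact hn (by simp [hf, h])
    have hsum := hx (ε / 2) (by linarith)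
    refine Summable.of_nonneg_of_le ?_ ?_ hsum
    · intro n
      apply Set.indicator_nonneg
      intro n _
      positivity
    · intro n
      apply Set.indicator_le_indicator_of_subset hsub
      intro n
      positivity
  · -- norm bound
    have : ‖x - (⟨f, hmem⟩ : lp (fun _ : ℕ => ℝ) ⊤)‖ ≤ ε / 2 := by
      apply lp.norm_le_of_forall_le (by linarith)
      intro n
      have : (x - (⟨f, hmem⟩ : lp (fun _ : ℕ => ℝ) ⊤)) n = x n - f n := rfl
      rw [this]
      by_cases h : ε / 2 ≤ |x n|
      · simp [hf, h]
        linarith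
      · push_neg at h
        simp only [hf, if_neg (not_le.mpr h), sub_zero, Real.norm_eq_abs]
        linarith
    linarith
end

section
/- Let X be a topological space and ℐ a σ-ideal of subsets of X (closed under subsets and countable unions). Then C₀^ℐ(X) = {f ∈ C_b(X) : coz(f) has a neighborhood belonging to ℐ}, where coz(f) = {x : f(x) ≠ 0}. -/
open Set

variable {X : Type*} [TopologicalSpace X]

/-- `C₀^ℐ(X)`: bounded continuous functions `f` such that for every positive integer `n`
the set `{x : |f x| ≥ 1/n}` has a neighborhood belonging to `I`. -/
def C0 (I : Set (Set X)) : Set (BoundedContinuousFunction X ℝ) :=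
  {f | ∀ n : ℕ, 0 < n → ∃ U ∈ I, {x | 1 / (n : ℝ) ≤ |f x|} ⊆ interior U}

/-- If `ℐ` is a σ-ideal of subsets of `X` (closed under subsets and countable unions),
then `C₀^ℐ(X)` consists exactly of those bounded continuous functions whose cozero-set
has a neighborhood belonging to `ℐ`. -/
theorem C0_eq_coz_nbhd (I : Set (Set X)) (hne : I.Nonempty)
    (hdown : ∀ A B : Set X, A ∈ I → B ⊆ A → B ∈ I)
    (hcount : ∀ s : ℕ → Set X, (∀ n, s n ∈ I) → (⋃ n, s n) ∈ I) :
    C0 I = {f : BoundedContinuousFunction X ℝ |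
      ∃ U ∈ I, Function.support ⇑f ⊆ interior U} := by
  ext f
  constructor
  · intro hf
    choose U hUI hUsub using fun n => hf (n + 1) (Nat.succ_pos n)
    refine ⟨⋃ n, interior (U n), ?_, ?_⟩
    · exact hcount _ fun n => hdown _ _ (hUI n) interior_subset
    · intro x hx
      have hfx : f x ≠ 0 := hx
      obtain ⟨n, hn⟩ := exists_nat_one_div_lt (abs_pos.mpr hfx)
      have hx' : x ∈ interior (U n) := hUsub n (by
        simp only [mem_setOf_eq]
        push_cast
        exact hn.le)
      have : x ∈ ⋃ n, interior (U n) := mem_iUnion.mpr ⟨n, hx'⟩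
      have hopen : IsOpen (⋃ n, interior (U n)) := isOpen_iUnion fun n => isOpen_interior
      rwa [hopen.interior_eq]
  · rintro ⟨U, hUI, hsub⟩ n hn
    refine ⟨U, hUI, fun x hx => hsub ?_⟩
    have : (0 : ℝ) < 1 / n := by positivity
    have : f x ≠ 0 := by
      intro h
      simp only [mem_setOf_eq, h, abs_zero] at hx
      linarith
    exact this
end
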